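/- Let f, f̃ : ℝ → ℝ with ‖f(t) − f̃(t)‖ ≤ ε for all t, f Lipschitz with constant K, I = [t₁,t₂] an interval with endpoints multiples of h > 0, and Î the discretization {t₁, t₁+h, ..., t₂}. Define g(t) = max_{t' ∈ t ⊕ I} f(t') and g̃(t) = max_{t' ∈ t ⊕ Î} f̃(t'), where t ⊕ I = [t+t₁, t+t₂]. Then ‖g(t) − g̃(t)‖ ≤ Kh/2 + ε for all t. -/

import Mathlib

theorem stmt10 (f ft : ℝ → ℝ) (ε K h : ℝ) (hK : 0 ≤ K) (hh : 0 < h)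
    (k₁ k₂ : ℕ) (hk : k₁ ≤ k₂)
    (hf : LipschitzWith K.toNNReal f)
    (hft : ∀ t : ℝ, |f t - ft t| ≤ ε) (t : ℝ) :
    |sSup (f '' Set.Icc (t + k₁ * h) (t + k₂ * h)) -
      sSup (ft '' {x | ∃ j : ℕ, j ≤ k₂ - k₁ ∧ x = t + k₁ * h + j * h})| ≤
      K * h / 2 + ε := by
  set a := t + k₁ * h with ha
  set b := t + k₂ * h with hb
  set n := k₂ - k₁ with hn
  have hnR : (n : ℝ) = (k₂ : ℝ) - k₁ := by
    rw [hn, Nat.cast_sub hk]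
  have hab : a ≤ b := by
    have h12 : (k₁ : ℝ) ≤ k₂ := by exact_mod_cast hk
    have := hh.le
    nlinarith
  have hεpos : 0 ≤ ε := le_trans (abs_nonneg _) (hft 0)
  set D : Set ℝ := {x | ∃ j : ℕ, j ≤ n ∧ x = a + j * h} with hD
  have hDfin : D.Finite := by
    have hsub : D ⊆ (fun j : ℕ => a + j * h) '' (Set.Iic n) := by
      rintro x ⟨j, hj, rfl⟩; exact ⟨j, hj, rfl⟩
    exact ((Set.finite_Iic n).image _).subset hsub
  have hDne : D.Nonempty := ⟨a, 0, by simp⟩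
  have hnab : a + n * h = b := by
    rw [hnR, ha, hb]; ring
  have hDsub : D ⊆ Set.Icc a b := by
    rintro x ⟨j, hj, rfl⟩
    have hjn : (j : ℝ) ≤ n := by exact_mod_cast hj
    have hj0 : (0 : ℝ) ≤ j := Nat.cast_nonneg j
    constructor
    · nlinarith [hh.le]
    · nlinarith [hh.le]
  have hIne : (Set.Icc a b).Nonempty := ⟨a, le_refl a, hab⟩
  have hfIbdd : BddAbove (f '' Set.Icc a b) :=
    (isCompact_Icc.image hf.continuous).bddAbove
  have hfIne : (f '' Set.Icc a b).Nonempty := hIne.image f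
  have hDbdd : BddAbove (ft '' D) := (hDfin.image ft).bddAbove
  have hDine : (ft '' D).Nonempty := hDne.image ft
  have hlip : ∀ x y : ℝ, f x - f y ≤ K * |x - y| := by
    intro x y
    have := hf.dist_le_mul x y
    rw [Real.dist_eq, Real.dist_eq, Real.coe_toNNReal K hK] at this
    have := le_trans (le_abs_self _) this
    linarith
  have key1 : sSup (f '' Set.Icc a b) ≤ sSup (ft '' D) + (K * h / 2 + ε) := by
    apply csSup_le hfIne
    rintro _ ⟨x, ⟨hx1, hx2⟩, rfl⟩
    set r := (x - a) / h with hr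
    have hr0 : 0 ≤ r := div_nonneg (by linarith) hh.le
    have hrn : r ≤ n := by
      rw [hr, div_le_iff₀ hh]
      nlinarith
    set j := ⌊r + 1/2⌋₊ with hjdef
    have hjn : j ≤ n := by
      have h1 : r + 1/2 < ((n + 1 : ℕ) : ℝ) := by push_cast; linarith
      have h2 : j < n + 1 := (Nat.floor_lt (by linarith)).2 h1
      omega
    have hjle : (j : ℝ) ≤ r + 1/2 := Nat.floor_le (by linarith)
    have hjge : r + 1/2 < (j : ℝ) + 1 := Nat.lt_floor_add_one _
    have hxj : |x - (a + j * h)| ≤ h / 2 := by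
      have hx : x = a + r * h := by
        rw [hr]; field_simp; ring
      rw [hx, abs_le]
      constructor <;> nlinarith
    have hfb : f x ≤ f (a + j * h) + K * h / 2 := by
      have := hlip x (a + j * h)
      nlinarith [mul_le_mul_of_nonneg_left hxj hK]
    have hftb : f (a + j * h) ≤ ft (a + j * h) + ε := by
      have := (abs_le.1 (hft (a + j * h))).2; linarith
    have hmem : ft (a + j * h) ≤ sSup (ft '' D) :=
      le_csSup hDbdd ⟨a + j * h, ⟨j, hjn, rfl⟩, rfl⟩
    linarith
  have key2 : sSup (ft '' D) ≤ sSup (f '' Set.Icc a b) + ε := by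
    apply csSup_le hDine
    rintro _ ⟨y, hy, rfl⟩
    have h1 : ft y ≤ f y + ε := by
      have := (abs_le.1 (hft y)).1; linarith
    have h2 : f y ≤ sSup (f '' Set.Icc a b) :=
      le_csSup hfIbdd ⟨y, hDsub hy, rfl⟩
    linarith
  have hKh : 0 ≤ K * h / 2 := by positivity
  rw [abs_sub_le_iff]
  constructor <;> [linarith; linarith]
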